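/- Let q ≤ min(l,n) and let E = [[I_q, 0],[0,0]] ∈ ℝ^{l×n}, H = [[H₁,H₂],[H₃,H₄]], L = [L₁;L₂] with H₁ ∈ ℝ^{q×q}, L₁ ∈ ℝ^{q×m}. Define A = [[H₁,H₂],[0,0]] ∈ ℝ^{n×n}, B^w = [[L₁,0],[0,I_{n−q}]] ∈ ℝ^{n×(m+n−q)}, C = [H₃,H₄] ∈ ℝ^{(l−q)×n}, D^w = [L₂,0] ∈ ℝ^{(l−q)×(m+n−q)}. Then for every subspace V ⊆ ℝⁿ, the preimage under the stacked map x ↦ (Ax, Cx) of the subspace (V × {0}) + Im[B^w; D^w] equals H⁻¹(EV + Im L); consequently the controlled-invariant subspace sequence of (A,B^w,C,D^w) coincides with the augmented Wong sequence 𝒱_i of (E,H,L). -/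

import Mathlib

open Matrix


lemma fromColumns_mulVec' {R : Type*} [Semiring R] {m n₁ n₂ : Type*} [Fintype n₁] [Fintype n₂]
    (A₁ : Matrix m n₁ R) (A₂ : Matrix m n₂ R) (v : n₁ ⊕ n₂ → R) :
    fromCols A₁ A₂ *ᵥ v = A₁ *ᵥ (v ∘ Sum.inl) + A₂ *ᵥ (v ∘ Sum.inr) := by
  conv_lhs => rw [← Sum.elim_comp_inl_inr v, fromCols_mulVec_sumElim]

theorem step (q r p m : ℕ)
    (H₁ : Matrix (Fin q) (Fin q) ℝ) (H₂ : Matrix (Fin q) (Fin r) ℝ)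
    (H₃ : Matrix (Fin p) (Fin q) ℝ) (H₄ : Matrix (Fin p) (Fin r) ℝ)
    (L₁ : Matrix (Fin q) (Fin m) ℝ) (L₂ : Matrix (Fin p) (Fin m) ℝ)
    (V : Submodule ℝ (Fin q ⊕ Fin r → ℝ)) :
    Submodule.comap ((Matrix.fromBlocks H₁ H₂ 0 0).mulVecLin.prod (Matrix.fromCols H₃ H₄).mulVecLin)
        ((Submodule.prod V ⊥) ⊔ LinearMap.range ((Matrix.fromBlocks L₁ 0 0 1).mulVecLin.prod (Matrix.fromCols L₂ (0 : Matrix (Fin p) (Fin r) ℝ)).mulVecLin)) =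
      Submodule.comap (Matrix.fromBlocks H₁ H₂ H₃ H₄).mulVecLin
        (Submodule.map (Matrix.fromBlocks (1 : Matrix (Fin q) (Fin q) ℝ) 0 0 (0: Matrix (Fin p) (Fin r) ℝ)).mulVecLin V ⊔ LinearMap.range (Matrix.fromRows L₁ L₂).mulVecLin) := by
  ext x
  simp only [Submodule.mem_comap, LinearMap.prod_apply, Pi.prod, mulVecLin_apply,
    Submodule.mem_sup, Submodule.mem_prod, Submodule.mem_bot, LinearMap.mem_range,
    Submodule.mem_map, fromBlocks_mulVec, fromRows_mulVec, fromColumns_mulVec',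
    zero_mulVec, add_zero, zero_add, mulVec_zero, one_mulVec, Prod.exists]
  constructor
  · rintro ⟨a, b, ⟨ha, rfl⟩, a1, b1, ⟨y, hy⟩, hsum⟩
    cases hy
    have h1 := congrArg Prod.fst hsum
    have h2 := congrArg Prod.snd hsum
    simp only [Prod.fst_add, Prod.snd_add, zero_add] at h1 h2
    refine ⟨Sum.elim (a ∘ Sum.inl) 0, ⟨a, ha, rfl⟩,
      Sum.elim (L₁ *ᵥ (y ∘ Sum.inl)) (L₂ *ᵥ (y ∘ Sum.inl)), ⟨y ∘ Sum.inl, rfl⟩, ?_⟩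
    funext i
    cases i with
    | inl j =>
      have := congrFun h1 (Sum.inl j)
      simpa [fromBlocks_mulVec] using this
    | inr k =>
      have := congrFun h2 k
      simpa using this
  · rintro ⟨-, ⟨v, hv, rfl⟩, -, ⟨u, rfl⟩, hsum⟩
    refine ⟨v, 0, ⟨hv, rfl⟩, _, _,
      ⟨Sum.elim u (fun k => - v (Sum.inr k)), rfl⟩, ?_⟩
    have h1 := fun j => congrFun hsum (Sum.inl j)
    have h2 := fun k => congrFun hsum (Sum.inr k)
    simp only [Pi.add_apply, Sum.elim_inl, Sum.elim_inr, Pi.zero_apply, zero_add] at h1 h2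
    refine Prod.ext ?_ ?_ <;> funext i
    · cases i with
      | inl j => simpa [Sum.elim_comp_inl, fromBlocks_mulVec] using h1 j
      | inr k => simp [fromBlocks_mulVec]
    · simpa [Sum.elim_comp_inl] using h2 i


/-- For the explicitation `(A, Bʷ, C, Dʷ)` of the DACS `(E, H, L)` in the indicated block form,
one recursion step of the controlled-invariant subspace sequence coincides with one step of the
augmented Wong sequence, and consequently the two sequences coincide. -/
theorem stmt12 (q r p m : ℕ)
    (H₁ : Matrix (Fin q) (Fin q) ℝ) (H₂ : Matrix (Fin q) (Fin r) ℝ)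
    (H₃ : Matrix (Fin p) (Fin q) ℝ) (H₄ : Matrix (Fin p) (Fin r) ℝ)
    (L₁ : Matrix (Fin q) (Fin m) ℝ) (L₂ : Matrix (Fin p) (Fin m) ℝ)
    (E : Matrix (Fin q ⊕ Fin p) (Fin q ⊕ Fin r) ℝ)
    (Hm : Matrix (Fin q ⊕ Fin p) (Fin q ⊕ Fin r) ℝ)
    (L : Matrix (Fin q ⊕ Fin p) (Fin m) ℝ)
    (A : Matrix (Fin q ⊕ Fin r) (Fin q ⊕ Fin r) ℝ)
    (Bw : Matrix (Fin q ⊕ Fin r) (Fin m ⊕ Fin r) ℝ)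
    (C : Matrix (Fin p) (Fin q ⊕ Fin r) ℝ)
    (Dw : Matrix (Fin p) (Fin m ⊕ Fin r) ℝ)
    (hE : E = Matrix.fromBlocks 1 0 0 0)
    (hH : Hm = Matrix.fromBlocks H₁ H₂ H₃ H₄)
    (hL : L = Matrix.fromRows L₁ L₂)
    (hA : A = Matrix.fromBlocks H₁ H₂ 0 0)
    (hBw : Bw = Matrix.fromBlocks L₁ 0 0 1)
    (hC : C = Matrix.fromCols H₃ H₄)
    (hDw : Dw = Matrix.fromCols L₂ 0) :
    (∀ V : Submodule ℝ (Fin q ⊕ Fin r → ℝ),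
      Submodule.comap (A.mulVecLin.prod C.mulVecLin)
        ((Submodule.prod V ⊥) ⊔ LinearMap.range (Bw.mulVecLin.prod Dw.mulVecLin)) =
      Submodule.comap Hm.mulVecLin
        (Submodule.map E.mulVecLin V ⊔ LinearMap.range L.mulVecLin)) ∧
    ∀ V₁ V₂ : ℕ → Submodule ℝ (Fin q ⊕ Fin r → ℝ),
      V₁ 0 = ⊤ → V₂ 0 = ⊤ →
      (∀ i, V₁ (i + 1) = Submodule.comap (A.mulVecLin.prod C.mulVecLin)
        ((Submodule.prod (V₁ i) ⊥) ⊔ LinearMap.range (Bw.mulVecLin.prod Dw.mulVecLin))) →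
      (∀ i, V₂ (i + 1) = Submodule.comap Hm.mulVecLin
        (Submodule.map E.mulVecLin (V₂ i) ⊔ LinearMap.range L.mulVecLin)) →
      ∀ i, V₁ i = V₂ i := by
  subst hE hH hL hA hBw hC hDw
  refine ⟨step q r p m H₁ H₂ H₃ H₄ L₁ L₂, ?_⟩
  intro V₁ V₂ h₁0 h₂0 h₁s h₂s i
  induction i with
  | zero => rw [h₁0, h₂0]
  | succ i ih => rw [h₁s, h₂s, ih, step q r p m H₁ H₂ H₃ H₄ L₁ L₂]
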